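/- Let (Ω, F, P) be a probability space and p a positive natural number. Let β ∈ ℝ^p be fixed with null set S₀ = {j : β_j = 0}, let β̂, β̃ : Ω → ℝ^p be random vectors, let γ > 0, q ∈ (0,1), and suppose P(‖β̂ − β‖_∞ ≥ γ) ≤ α. Define b_j = |β̃_j| + γ and suppose τ : Ω → (0,∞) is a random threshold satisfying #{j : b_j ≥ τ} ≤ q · max(#{j : |β̂_j| ≥ τ}, 1) almost surely. Then the false discovery rate satisfies E[ #{j ∈ S₀ : |β̂_j| ≥ τ} / max(#{j : |β̂_j| ≥ τ}, 1) ] ≤ q + α. -/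

import Mathlib

open MeasureTheory

theorem stmt5 {Ω : Type*} [MeasurableSpace Ω] (μ : Measure Ω) [IsProbabilityMeasure μ]
    {p : ℕ} (hp : 0 < p) (β : Fin p → ℝ) (βh βt : Ω → Fin p → ℝ)
    (γ q α : ℝ) (hγ : 0 < γ) (hq : q ∈ Set.Ioo (0:ℝ) 1)
    (herr : (μ {ω | γ ≤ ‖βh ω - β‖}).toReal ≤ α)
    (b : Ω → Fin p → ℝ) (hb : ∀ ω j, b ω j = |βt ω j| + γ)
    (τ : Ω → ℝ) (hτpos : ∀ ω, 0 < τ ω)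
    (hτ : ∀ᵐ ω ∂μ,
      ((Finset.univ.filter (fun j : Fin p => τ ω ≤ b ω j)).card : ℝ) ≤
        q * max ((Finset.univ.filter (fun j : Fin p => τ ω ≤ |βh ω j|)).card : ℝ) 1)
    (hint : Integrable (fun ω =>
      (((Finset.univ.filter (fun j : Fin p => β j = 0)).filter
          (fun j => τ ω ≤ |βh ω j|)).card : ℝ) /
        max ((Finset.univ.filter (fun j : Fin p => τ ω ≤ |βh ω j|)).card : ℝ) 1) μ) :
    ∫ ω, (((Finset.univ.filter (fun j : Fin p => β j = 0)).filter
          (fun j => τ ω ≤ |βh ω j|)).card : ℝ) /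
        max ((Finset.univ.filter (fun j : Fin p => τ ω ≤ |βh ω j|)).card : ℝ) 1 ∂μ
      ≤ q + α := by
  set f : Ω → ℝ := fun ω =>
    (((Finset.univ.filter (fun j : Fin p => β j = 0)).filter
          (fun j => τ ω ≤ |βh ω j|)).card : ℝ) /
        max ((Finset.univ.filter (fun j : Fin p => τ ω ≤ |βh ω j|)).card : ℝ) 1 with hfdef
  set g : Ω → ℝ := fun ω => max (f ω - q) 0 with hgdef
  set s : Set Ω := {ω | γ ≤ ‖βh ω - β‖} with hsdef
  set t : Set Ω := toMeasurable μ s with htdef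
  have htm : MeasurableSet t := measurableSet_toMeasurable μ s
  have hdpos : ∀ ω, (0:ℝ) <
      max ((Finset.univ.filter (fun j : Fin p => τ ω ≤ |βh ω j|)).card : ℝ) 1 :=
    fun ω => lt_of_lt_of_le one_pos (le_max_right _ _)
  have hf1 : ∀ ω, f ω ≤ 1 := by
    intro ω
    rw [hfdef]
    apply div_le_one_of_le₀ _ (le_of_lt (hdpos ω))
    refine le_trans ?_ (le_max_left _ _)
    exact_mod_cast Finset.card_le_card (Finset.filter_subset_filter _
      (Finset.filter_subset _ _))
  -- key pointwise bound: a.e., g ≤ indicator of t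
  have hkey : ∀ᵐ ω ∂μ, g ω ≤ t.indicator (fun _ => (1:ℝ)) ω := by
    filter_upwards [hτ] with ω hτω
    by_cases hωt : ω ∈ t
    · simp only [Set.indicator_of_mem hωt]
      have := hf1 ω
      simp only [hgdef]
      have : f ω - q ≤ 1 := by linarith [hq.1]
      exact max_le this zero_le_one
    · have hωs : ω ∉ s := fun h => hωt (subset_toMeasurable μ s h)
      have hlt : ‖βh ω - β‖ < γ := lt_of_not_ge hωs
      -- selected nulls are contained in {j : τ ω ≤ b ω j}
      have hsub : ((Finset.univ.filter (fun j : Fin p => β j = 0)).filter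
          (fun j => τ ω ≤ |βh ω j|)) ⊆
          Finset.univ.filter (fun j : Fin p => τ ω ≤ b ω j) := by
        intro j hj
        simp only [Finset.mem_filter, Finset.mem_univ, true_and] at hj ⊢
        obtain ⟨hj0, hjsel⟩ := hj
        have h1 : |βh ω j| ≤ ‖βh ω - β‖ := by
          have := norm_le_pi_norm (βh ω - β) j
          simpa [Real.norm_eq_abs, Pi.sub_apply, hj0, sub_zero] using this
        have h2 : |βh ω j| < γ := lt_of_le_of_lt h1 hlt
        rw [hb]
        have h3 : |βh ω j| ≤ |βt ω j| + γ :=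
          le_trans h2.le (le_add_of_nonneg_left (abs_nonneg _))
        linarith [hjsel]
      have hfq : f ω ≤ q := by
        rw [hfdef]
        rw [div_le_iff₀ (hdpos ω)]
        refine le_trans ?_ hτω
        exact_mod_cast Finset.card_le_card hsub
      have : g ω = 0 := by
        simp only [hgdef]
        exact max_eq_right (by linarith)
      rw [this]
      exact Set.indicator_nonneg (fun _ _ => zero_le_one) ω
  have hgint : Integrable g μ := (hint.sub (integrable_const q)).pos_part
  have hind : Integrable (t.indicator (fun _ => (1:ℝ))) μ :=
    (integrable_const (1:ℝ)).indicator htm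
  have step1 : ∫ ω, f ω ∂μ ≤ ∫ ω, (q + g ω) ∂μ := by
    apply integral_mono hint ((integrable_const q).add hgint)
    intro ω
    simp only [hgdef, Pi.add_apply]
    have : f ω - q ≤ max (f ω - q) 0 := le_max_left _ _
    linarith
  have step2 : ∫ ω, (q + g ω) ∂μ = q + ∫ ω, g ω ∂μ := by
    rw [integral_add (integrable_const q) hgint, integral_const]
    simp
  have step3 : ∫ ω, g ω ∂μ ≤ ∫ ω, t.indicator (fun _ => (1:ℝ)) ω ∂μ :=
    integral_mono_ae hgint hind hkey
  have step4 : ∫ ω, t.indicator (fun _ => (1:ℝ)) ω ∂μ = (μ t).toReal := by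
    rw [integral_indicator_const (1:ℝ) htm]
    simp
    rfl
  have step5 : (μ t).toReal ≤ α := by
    rw [htdef, measure_toMeasurable]
    exact herr
  calc ∫ ω, f ω ∂μ ≤ q + ∫ ω, g ω ∂μ := by rw [← step2]; exact step1
    _ ≤ q + α := by
        have := le_trans step3 (le_of_eq step4)
        linarith [le_trans this step5]
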